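/- Let N ≥ 2 and let S ⊆ {1, …, N} with r = |S| and 1 ≤ r ≤ N−1. Let D be the N×N diagonal 0/1 matrix with Dᵢᵢ = 1 iff i ∈ S, let J be the N×N all-ones matrix, and let I be the N×N identity matrix. Then the characteristic polynomial of the matrix M = (I − J/N)(I − D) is det(X·I − M) = X^r · (X − 1)^{N−r−1} · (X − r/N). -/

import Mathlib

open Polynomial Matrix


/-- The characteristic polynomial of `(I - J/N)(I - D)`, the product of the
orthogonal projections onto the null space of the all-ones row vector and onto
the null space of the coordinate selector for `S`, is
`X^r (X - 1)^(N-r-1) (X - r/N)`. -/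
theorem stmt6 {N : ℕ} (hN : 2 ≤ N) (S : Finset (Fin N)) (r : ℕ) (hr : r = S.card)
    (hr1 : 1 ≤ r) (hr2 : r ≤ N - 1)
    (D : Matrix (Fin N) (Fin N) ℝ)
    (hD : D = Matrix.diagonal (fun i => if i ∈ S then (1 : ℝ) else 0))
    (J : Matrix (Fin N) (Fin N) ℝ) (hJ : J = Matrix.of (fun _ _ => (1 : ℝ))) :
    ((1 - (N : ℝ)⁻¹ • J) * (1 - D)).charpoly
      = Polynomial.X ^ r * (Polynomial.X - 1) ^ (N - r - 1)
        * (Polynomial.X - Polynomial.C ((r : ℝ) / N)) := by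
  classical
  subst hD hJ
  have hN0 : (N : ℝ) ≠ 0 := by positivity
  set d : Fin N → ℝ[X] := fun i => if i ∈ S then Polynomial.X else Polynomial.X - 1 with hd
  set u : Fin N → ℝ[X] := fun _ => 1 with hu
  set w : Fin N → ℝ[X] := fun j => if j ∈ S then 0 else Polynomial.C (N : ℝ)⁻¹ with hw
  have hchar : charmatrix ((1 - (N : ℝ)⁻¹ • Matrix.of (fun _ _ => (1 : ℝ))) *
        (1 - Matrix.diagonal (fun i => if i ∈ S then (1 : ℝ) else 0)))
      = Matrix.diagonal d + Matrix.replicateCol Unit u * Matrix.replicateRow Unit w := by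
    have hM : ((1 - (N : ℝ)⁻¹ • Matrix.of (fun _ _ => (1 : ℝ))) *
        (1 - Matrix.diagonal (fun i => if i ∈ S then (1 : ℝ) else 0)))
        = fun i j => ((if i = j then (1:ℝ) else 0) - (N : ℝ)⁻¹) * (if j ∈ S then 0 else 1) := by
      have : (1 - Matrix.diagonal (fun i : Fin N => if i ∈ S then (1 : ℝ) else 0))
          = Matrix.diagonal (fun i => if i ∈ S then (0:ℝ) else 1) := by
        ext i j
        rcases eq_or_ne i j with rfl | hij
        · by_cases h : i ∈ S <;>
            simp [Matrix.sub_apply, Matrix.one_apply, Matrix.diagonal_apply_eq, h]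
        · simp [Matrix.sub_apply, Matrix.one_apply_ne hij, Matrix.diagonal_apply_ne _ hij]
      rw [this]
      ext i j
      refine (Matrix.mul_diagonal _ _ i j).trans ?_
      by_cases h : j ∈ S <;> by_cases hij : i = j <;>
        simp [Matrix.sub_apply, Matrix.one_apply, Matrix.of_apply, Pi.smul_apply,
          smul_eq_mul, h, hij] <;> ring
    refine Matrix.ext fun i j => ?_
    rw [show ((1 - (N : ℝ)⁻¹ • Matrix.of (fun _ _ => (1 : ℝ))) * (1 - Matrix.diagonal (fun i => if i ∈ S then (1 : ℝ) else 0)) : Matrix (Fin N) (Fin N) ℝ) = Matrix.of (fun i j => ((if i = j then (1:ℝ) else 0) - (N : ℝ)⁻¹) * (if j ∈ S then 0 else 1)) from hM]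
    by_cases hij : i = j
    · subst hij
      by_cases h : i ∈ S <;>
        simp [charmatrix_apply_eq, hd, hu, hw, Matrix.diagonal_apply_eq, Matrix.mul_apply,
          Matrix.replicateCol_apply, Matrix.replicateRow_apply, h, map_sub, _root_.map_mul, sub_sub, _root_.map_one] <;> ring
    · by_cases h : j ∈ S <;>
        simp [charmatrix_apply_ne _ _ _ hij, hd, hu, hw, Matrix.diagonal_apply_ne _ hij,
          Matrix.mul_apply, Matrix.replicateCol_apply, Matrix.replicateRow_apply, h, hij]
  -- pass to the fraction field
  rw [Matrix.charpoly, hchar]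
  have hinj := RatFunc.algebraMap_injective ℝ
  set φ := algebraMap ℝ[X] (RatFunc ℝ) with hφ
  apply hinj
  rw [RingHom.map_det, RingHom.mapMatrix_apply]
  have hmap : (Matrix.diagonal d + Matrix.replicateCol Unit u * Matrix.replicateRow Unit w).map φ
      = Matrix.diagonal (fun i => φ (d i)) +
        Matrix.replicateCol Unit (fun i => φ (u i)) * Matrix.replicateRow Unit (fun j => φ (w j)) := by
    ext i j
    rcases eq_or_ne i j with rfl | hij <;>
      simp [Matrix.map_apply, Matrix.add_apply, Matrix.mul_apply, Matrix.replicateCol_apply,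
        Matrix.replicateRow_apply, Matrix.diagonal_apply_eq, Matrix.diagonal_apply_ne _ ‹_›, map_add,
        _root_.map_mul]
  rw [hmap]
  have hdne : ∀ i, φ (d i) ≠ 0 := by
    intro i
    have hX1 : (Polynomial.X - 1 : ℝ[X]) ≠ 0 := by
      have h := Polynomial.X_sub_C_ne_zero (R := ℝ) 1
      simpa using h
    have : d i ≠ 0 := by
      by_cases h : i ∈ S <;> simp only [hd, h, if_true, if_false]
      · exact Polynomial.X_ne_zero
      · exact hX1
    simpa [map_eq_zero_iff φ hinj] using this
  have hA : IsUnit (Matrix.diagonal (fun i => φ (d i))).det := by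
    rw [Matrix.det_diagonal]
    exact (Finset.prod_ne_zero_iff.mpr fun i _ => hdne i).isUnit
  rw [Matrix.det_add_replicateCol_mul_replicateRow hA]
  have hinvd : (Matrix.diagonal (fun i => φ (d i)))⁻¹
      = Matrix.diagonal (fun i => (φ (d i))⁻¹) := by
    apply Matrix.inv_eq_right_inv
    rw [Matrix.diagonal_mul_diagonal]
    have : (fun i => φ (d i) * (φ (d i))⁻¹) = fun _ => (1 : RatFunc ℝ) :=
      funext fun i => mul_inv_cancel₀ (hdne i)
    rw [this, Matrix.diagonal_one]
  rw [hinvd, Matrix.det_diagonal]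
  have hsingle : (1 + Matrix.replicateRow Unit (fun j => φ (w j)) *
        Matrix.diagonal (fun i => (φ (d i))⁻¹) *
        Matrix.replicateCol Unit (fun i => φ (u i))).det
      = 1 + ∑ j, φ (w j) * (φ (d j))⁻¹ := by
    rw [Matrix.det_unique]
    simp [Matrix.add_apply, Matrix.one_apply_eq, Matrix.mul_apply, Matrix.replicateRow_apply,
      Matrix.replicateCol_apply, Matrix.diagonal_apply, hu, Finset.sum_ite_eq, mul_comm]
  rw [hsingle]
  set x : RatFunc ℝ := φ Polynomial.X with hx
  have hx1 : x - 1 ≠ 0 := by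
    have h0 : (Polynomial.X - 1 : ℝ[X]) ≠ 0 := by
      have h := Polynomial.X_sub_C_ne_zero (R := ℝ) 1
      simpa using h
    have : φ (Polynomial.X - 1) ≠ 0 := by
      rw [map_ne_zero_iff φ hinj]; exact h0
    simpa [map_sub] using this
  have hNP : ((N : ℕ) : ℝ[X]) ≠ 0 := by
    simpa using Polynomial.C_ne_zero.mpr hN0
  have hNK : ((N : ℕ) : RatFunc ℝ) ≠ 0 := by
    rw [← map_natCast φ N]
    exact (map_ne_zero_iff φ hinj).mpr hNP
  have hφd : ∀ i, φ (d i) = if i ∈ S then x else x - 1 := by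
    intro i
    by_cases h : i ∈ S <;> simp [hd, h, map_sub, hx]
  have hScard : (Finset.univ.filter (fun j : Fin N => j ∈ S)).card = r := by
    rw [hr]; congr 1; ext i; simp
  have hcard : (Finset.univ.filter (fun j : Fin N => j ∉ S)).card = N - r := by
    have : (Finset.univ.filter (fun j : Fin N => j ∉ S)) = Sᶜ := by ext i; simp
    rw [this, Finset.card_compl, Fintype.card_fin, hr]
  have hprod : (∏ i, φ (d i)) = x ^ r * (x - 1) ^ (N - r) := by
    rw [Finset.prod_congr rfl fun i _ => hφd i, Finset.prod_ite, Finset.prod_const,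
      Finset.prod_const, hScard, hcard]
  have hCNinv : RatFunc.C (((N : ℝ))⁻¹) = (((N : ℕ) : RatFunc ℝ))⁻¹ := by
    rw [map_inv₀, map_natCast]
  have hsum : (∑ j, φ (w j) * (φ (d j))⁻¹)
      = ((N - r : ℕ) : RatFunc ℝ) * (((N : ℕ) : RatFunc ℝ))⁻¹ * (x - 1)⁻¹ := by
    have hterm : ∀ j, φ (w j) * (φ (d j))⁻¹
        = if j ∈ S then 0 else (((N : ℕ) : RatFunc ℝ))⁻¹ * (x - 1)⁻¹ := by
      intro j
      by_cases h : j ∈ S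
      · simp [hw, h]
      · rw [hφd j, if_neg h]
        simp only [hw, h, if_false, hφ, RatFunc.algebraMap_C]
        rw [hCNinv]
    rw [Finset.sum_congr rfl fun j _ => hterm j, Finset.sum_ite, Finset.sum_const,
      Finset.sum_const, smul_zero, zero_add, nsmul_eq_mul, hcard, mul_assoc]
  rw [hprod, hsum]
  have hrhs : φ (Polynomial.X ^ r * (Polynomial.X - 1) ^ (N - r - 1) *
        (Polynomial.X - Polynomial.C ((r : ℝ) / N)))
      = x ^ r * (x - 1) ^ (N - r - 1) *
        (x - ((r : ℕ) : RatFunc ℝ) / (((N : ℕ) : RatFunc ℝ))) := by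
    rw [_root_.map_mul, _root_.map_mul, map_pow, map_pow, map_sub, map_sub, _root_.map_one,
      hφ, RatFunc.algebraMap_C]
    congr 2
    rw [div_eq_mul_inv, _root_.map_mul (RatFunc.C (K := ℝ)), hCNinv, div_eq_mul_inv]
    congr 1
    exact (map_natCast (RatFunc.C (K := ℝ)) r)
  rw [hrhs]
  have hcast : ((N - r : ℕ) : RatFunc ℝ) = ((N : ℕ) : RatFunc ℝ) - ((r : ℕ) : RatFunc ℝ) := by
    have hrN : r ≤ N := by omega
    push_cast [Nat.cast_sub hrN]
    ring
  rw [hcast]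
  set k := N - r - 1 with hk
  have h2 : N - r = k + 1 := by omega
  rw [h2, pow_succ]
  field_simp
  ring
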